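/- Verma relations hold in the geometric Littelmann path model in ranks A₁×A₁ and A₂: let α, β be linear forms on V and α^∨, β^∨ ∈ V with α(α^∨) = β(β^∨) = 2. For every π ∈ C₀([0,T],V) and all c₁, c₂ ∈ ℝ: (a) if α(β^∨) = β(α^∨) = 0, then e_α^{c₁}·(e_β^{c₂}·π) = e_β^{c₂}·(e_α^{c₁}·π); (b) if α(β^∨) = β(α^∨) = −1, then e_α^{c₁}·e_β^{c₁+c₂}·e_α^{c₂}·π = e_β^{c₂}·e_α^{c₁+c₂}·e_β^{c₁}·π. -/

import Mathlib

open MeasureTheory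

/-- `ε_α(π) = log ∫₀^T e^{-α(π(s))} ds`. -/
noncomputable def pathEps {V : Type*} [NormedAddCommGroup V] [NormedSpace ℝ V]
    (α : V →ₗ[ℝ] ℝ) (T : ℝ) (π : ℝ → V) : ℝ :=
  Real.log (∫ s in (0:ℝ)..T, Real.exp (-α (π s)))

/-- The geometric Littelmann operator on paths over the horizon `T`. -/
noncomputable def pathAct {V : Type*} [NormedAddCommGroup V] [NormedSpace ℝ V]
    (α : V →ₗ[ℝ] ℝ) (αv : V) (T : ℝ) (c : ℝ) (π : ℝ → V) : ℝ → V :=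
  fun t => π t + Real.log (1 + ((Real.exp c - 1) / Real.exp (pathEps α T π)) *
    ∫ s in (0:ℝ)..t, Real.exp (-α (π s))) • αv

section VermaHelpers

open intervalIntegral Set


lemma ftc (f : ℝ → ℝ) (hf : Continuous f) (t : ℝ) :
    HasDerivAt (fun u => ∫ s in (0:ℝ)..u, f s) (f t) t :=
  intervalIntegral.integral_hasDerivAt_right (hf.intervalIntegrable _ _)
    (hf.stronglyMeasurableAtFilter _ _) hf.continuousAt

lemma contF (f : ℝ → ℝ) (hf : Continuous f) :
    Continuous (fun u => ∫ s in (0:ℝ)..u, f s) :=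
  continuous_iff_continuousAt.2 fun t => (ftc f hf t).continuousAt

lemma pos_transfer {T : ℝ} (hT : 0 ≤ T) (f : ℝ → ℝ) (hf : ContinuousOn f (Icc 0 T))
    (hpos : ∀ s ∈ Icc (0:ℝ) T, 0 ≤ f s) (k : ℝ)
    (hk : 0 < 1 + k * ∫ s in (0:ℝ)..T, f s) :
    ∀ s ∈ Icc (0:ℝ) T, 0 < 1 + k * ∫ u in (0:ℝ)..s, f u := by
  intro s hs
  have hi1 : IntervalIntegrable f volume 0 s := by
    apply ContinuousOn.intervalIntegrable
    apply hf.mono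
    rw [Set.uIcc_of_le hs.1]
    exact Set.Icc_subset_Icc le_rfl hs.2
  have hi2 : IntervalIntegrable f volume s T := by
    apply ContinuousOn.intervalIntegrable
    apply hf.mono
    rw [Set.uIcc_of_le hs.2]
    exact Set.Icc_subset_Icc hs.1 le_rfl
  have h1 : (0:ℝ) ≤ ∫ u in (0:ℝ)..s, f u :=
    intervalIntegral.integral_nonneg hs.1 (fun u hu => hpos u ⟨hu.1, hu.2.trans hs.2⟩)
  have h2 : (∫ u in (0:ℝ)..s, f u) ≤ ∫ u in (0:ℝ)..T, f u := by
    have hsplit : (∫ u in (0:ℝ)..s, f u) + (∫ u in s..T, f u) = ∫ u in (0:ℝ)..T, f u :=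
      intervalIntegral.integral_add_adjacent_intervals hi1 hi2
    have h3 : (0:ℝ) ≤ ∫ u in s..T, f u :=
      intervalIntegral.integral_nonneg hs.2 (fun u hu => hpos u ⟨hs.1.trans hu.1, hu.2⟩)
    linarith
  rcases le_or_gt 0 k with h | h
  · nlinarith
  · nlinarith

lemma L1 (g F : ℝ → ℝ) (hg : Continuous g) (hF : Continuous F) (k t : ℝ) :
    (∫ s in (0:ℝ)..t, g s * (1 + k * F s))
      = (∫ s in (0:ℝ)..t, g s) + k * ∫ s in (0:ℝ)..t, g s * F s := by
  have h1 : (∫ s in (0:ℝ)..t, g s * (1 + k * F s))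
      = ∫ s in (0:ℝ)..t, (g s + k * (g s * F s)) := by
    apply intervalIntegral.integral_congr; intro s _; ring
  rw [h1, intervalIntegral.integral_add (f := g) (g := fun s => k * (g s * F s)) (hg.intervalIntegrable _ _)
    ((continuous_const.mul (hg.mul hF)).intervalIntegrable _ _),
    intervalIntegral.integral_const_mul]

lemma Lprod (f g : ℝ → ℝ) (hf : Continuous f) (hg : Continuous g) (t : ℝ) :
    (∫ s in (0:ℝ)..t, f s) * (∫ s in (0:ℝ)..t, g s)
      = (∫ s in (0:ℝ)..t, f s * ∫ u in (0:ℝ)..s, g u)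
        + ∫ s in (0:ℝ)..t, g s * ∫ u in (0:ℝ)..s, f u := by
  set F := fun u => ∫ s in (0:ℝ)..u, f s with hF
  set G := fun u => ∫ s in (0:ℝ)..u, g s with hG
  have hcF : Continuous F := contF f hf
  have hcG : Continuous G := contF g hg
  have key : (∫ s in (0:ℝ)..t, (f s * G s + g s * F s)) = F t * G t - F 0 * G 0 := by
    apply intervalIntegral.integral_eq_sub_of_hasDerivAt
    · intro s _
      have := (ftc f hf s).mul (ftc g hg s)
      exact this.congr_deriv (by ring)
    · exact ((hf.mul hcG).add (hg.mul hcF)).intervalIntegrable _ _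
  have h0 : F 0 = 0 := integral_same
  rw [intervalIntegral.integral_add (f := fun s => f s * G s) (g := fun s => g s * F s) ((hf.mul hcG).intervalIntegrable _ _)
      ((hg.mul hcF).intervalIntegrable _ _)] at key
  rw [h0] at key
  linarith [key]

lemma L2 (f g : ℝ → ℝ) (hf : Continuous f) (hg : Continuous g) (k m t : ℝ)
    (hpos : ∀ s ∈ Set.uIcc (0:ℝ) t, 0 < 1 + k * ∫ u in (0:ℝ)..s, f u) :
    (∫ s in (0:ℝ)..t, f s * (1 + m * ((∫ u in (0:ℝ)..s, g u)
        + k * ∫ u in (0:ℝ)..s, g u * ∫ r in (0:ℝ)..u, f r))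
      / (1 + k * ∫ u in (0:ℝ)..s, f u) ^ 2)
    = ((∫ u in (0:ℝ)..t, f u) + m * ∫ u in (0:ℝ)..t, f u * ∫ r in (0:ℝ)..u, g r)
      / (1 + k * ∫ u in (0:ℝ)..t, f u) := by
  set F := fun u => ∫ s in (0:ℝ)..u, f s with hFdef
  set G := fun u => ∫ s in (0:ℝ)..u, g s with hGdef
  set D := fun u => ∫ s in (0:ℝ)..u, f s * G s with hDdef
  set E := fun u => ∫ s in (0:ℝ)..u, g s * F s with hEdef
  have hcF : Continuous F := contF f hf
  have hcG : Continuous G := contF g hg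
  have hcD : Continuous D := contF _ (hf.mul hcG)
  have hcE : Continuous E := contF _ (hg.mul hcF)
  have hEFG : ∀ s, E s = F s * G s - D s := by
    intro s; have := Lprod f g hf hg s; simp only [hFdef, hGdef, hDdef, hEdef]; linarith
  have key : (∫ s in (0:ℝ)..t, f s * (1 + m * (G s + k * E s)) / (1 + k * F s) ^ 2)
      = (F t + m * D t) / (1 + k * F t) - (F 0 + m * D 0) / (1 + k * F 0) := by
    apply intervalIntegral.integral_eq_sub_of_hasDerivAt
    · intro s hs
      have hne : (1 + k * F s) ≠ 0 := (hpos s hs).ne'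
      have hnum : HasDerivAt (fun u => F u + m * D u) (f s + m * (f s * G s)) s :=
        (ftc f hf s).add ((ftc _ (hf.mul hcG) s).const_mul m)
      have hden : HasDerivAt (fun u => 1 + k * F u) (k * f s) s :=
        ((ftc f hf s).const_mul k).const_add 1
      have h := hnum.div hden hne
      refine h.congr_deriv ?_
      rw [hEFG s]
      field_simp
      ring
    · apply ContinuousOn.intervalIntegrable
      apply ContinuousOn.div
      · exact (hf.mul (continuous_const.add (continuous_const.mul
          (hcG.add (continuous_const.mul hcE))))).continuousOn
      · exact ((continuous_const.add (continuous_const.mul hcF)).pow 2).continuousOn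
      · intro s hs
        exact pow_ne_zero 2 (hpos s hs).ne'
  have hF0 : F 0 = 0 := integral_same
  have hD0 : D 0 = 0 := integral_same
  rw [key, hF0, hD0]
  norm_num
  rfl

lemma pathEps_congr {V : Type*} [NormedAddCommGroup V] [NormedSpace ℝ V]
    (α : V →ₗ[ℝ] ℝ) {T : ℝ} (hT : 0 ≤ T) {π ρ : ℝ → V}
    (h : Set.EqOn π ρ (Set.Icc 0 T)) : pathEps α T π = pathEps α T ρ := by
  unfold pathEps
  congr 1
  apply intervalIntegral.integral_congr
  intro s hs
  rw [Set.uIcc_of_le hT] at hs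
  show Real.exp (-α (π s)) = Real.exp (-α (ρ s))
  rw [h hs]

lemma pathAct_congr {V : Type*} [NormedAddCommGroup V] [NormedSpace ℝ V]
    (α : V →ₗ[ℝ] ℝ) (αv : V) (c : ℝ) {T : ℝ} (hT : 0 ≤ T) {π ρ : ℝ → V}
    (h : Set.EqOn π ρ (Set.Icc 0 T)) :
    Set.EqOn (pathAct α αv T c π) (pathAct α αv T c ρ) (Set.Icc 0 T) := by
  intro t ht
  unfold pathAct
  rw [pathEps_congr α hT h, h ht]
  have : (∫ s in (0:ℝ)..t, Real.exp (-α (π s))) = ∫ s in (0:ℝ)..t, Real.exp (-α (ρ s)) := by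
    apply intervalIntegral.integral_congr
    intro s hs
    rw [Set.uIcc_of_le ht.1] at hs
    show Real.exp (-α (π s)) = Real.exp (-α (ρ s))
    rw [h ⟨hs.1, hs.2.trans ht.2⟩]
  rw [this]

lemma triple_eq {V : Type*} [NormedAddCommGroup V] [NormedSpace ℝ V] [FiniteDimensional ℝ V]
    (T : ℝ) (hT : 0 < T) (α β : V →ₗ[ℝ] ℝ) (αv βv : V)
    (hαα : α αv = 2) (hββ : β βv = 2) (hαβ : α βv = -1) (hβα : β αv = -1)
    (π : ℝ → V) (hπ : Continuous π) (c c' : ℝ) (t : ℝ) (ht : t ∈ Set.Icc (0:ℝ) T) :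
    pathAct α αv T c (pathAct β βv T (c + c') (pathAct α αv T c' π)) t
      = π t
        + Real.log (1 + ((Real.exp (c + c') - 1) * (∫ s in (0:ℝ)..T, Real.exp (-β (π s)))
              * (∫ s in (0:ℝ)..t, Real.exp (-α (π s)))
            + (Real.exp c - 1) * (Real.exp (c + c') - 1)
              * ∫ s in (0:ℝ)..t, Real.exp (-α (π s)) * ∫ u in (0:ℝ)..s, Real.exp (-β (π u)))
            / ((∫ s in (0:ℝ)..T, Real.exp (-β (π s)) * ∫ u in (0:ℝ)..s, Real.exp (-α (π u)))
              + Real.exp c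
                * ∫ s in (0:ℝ)..T, Real.exp (-α (π s)) * ∫ u in (0:ℝ)..s, Real.exp (-β (π u)))) • αv
        + Real.log (1 + ((Real.exp (c + c') - 1) * (∫ s in (0:ℝ)..T, Real.exp (-α (π s)))
              * (∫ s in (0:ℝ)..t, Real.exp (-β (π s)))
            + (Real.exp c' - 1) * (Real.exp (c + c') - 1)
              * ∫ s in (0:ℝ)..t, Real.exp (-β (π s)) * ∫ u in (0:ℝ)..s, Real.exp (-α (π u)))
            / ((∫ s in (0:ℝ)..T, Real.exp (-α (π s)) * ∫ u in (0:ℝ)..s, Real.exp (-β (π u)))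
              + Real.exp c'
                * ∫ s in (0:ℝ)..T, Real.exp (-β (π s)) * ∫ u in (0:ℝ)..s, Real.exp (-α (π u)))) • βv := by
  have hTmem : T ∈ Set.Icc (0:ℝ) T := ⟨hT.le, le_rfl⟩
  have hαcont : Continuous α := α.continuous_of_finiteDimensional
  have hβcont : Continuous β := β.continuous_of_finiteDimensional
  have hca : Continuous (fun s : ℝ => Real.exp (-α (π s))) :=
    Real.continuous_exp.comp ((hαcont.comp hπ).neg)
  have hcb : Continuous (fun s : ℝ => Real.exp (-β (π s))) :=
    Real.continuous_exp.comp ((hβcont.comp hπ).neg)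
  obtain ⟨a, ha_def⟩ : ∃ x : ℝ → ℝ, x = fun s => Real.exp (-α (π s)) := ⟨_, rfl⟩
  obtain ⟨b, hb_def⟩ : ∃ x : ℝ → ℝ, x = fun s => Real.exp (-β (π s)) := ⟨_, rfl⟩
  have haa : ∀ s, Real.exp (-α (π s)) = a s := fun s => by rw [ha_def]
  have hbb : ∀ s, Real.exp (-β (π s)) = b s := fun s => by rw [hb_def]
  have hca' : Continuous a := by rw [ha_def]; exact hca
  have hcb' : Continuous b := by rw [hb_def]; exact hcb
  clear hca hcb
  rename' hca' => hca, hcb' => hcb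
  obtain ⟨A, hA_def⟩ : ∃ x : ℝ → ℝ, x = fun r => ∫ s in (0:ℝ)..r, a s := ⟨_, rfl⟩
  obtain ⟨B, hB_def⟩ : ∃ x : ℝ → ℝ, x = fun r => ∫ s in (0:ℝ)..r, b s := ⟨_, rfl⟩
  have hAr : ∀ r, (∫ s in (0:ℝ)..r, a s) = A r := fun r => by rw [hA_def]
  have hBr : ∀ r, (∫ s in (0:ℝ)..r, b s) = B r := fun r => by rw [hB_def]
  obtain ⟨D, hD_def⟩ : ∃ x : ℝ → ℝ, x = fun r => ∫ s in (0:ℝ)..r, a s * B s := ⟨_, rfl⟩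
  obtain ⟨E, hE_def⟩ : ∃ x : ℝ → ℝ, x = fun r => ∫ s in (0:ℝ)..r, b s * A s := ⟨_, rfl⟩
  have hDr : ∀ r, (∫ s in (0:ℝ)..r, a s * B s) = D r := fun r => by rw [hD_def]
  have hEr : ∀ r, (∫ s in (0:ℝ)..r, b s * A s) = E r := fun r => by rw [hE_def]
  simp only [haa, hbb, hAr, hBr, hDr, hEr]
  have hcA : Continuous A := by rw [hA_def]; exact contF a hca
  have hcB : Continuous B := by rw [hB_def]; exact contF b hcb
  have hposa : ∀ s, 0 < a s := fun s => by rw [← haa s]; exact Real.exp_pos _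
  have hposb : ∀ s, 0 < b s := fun s => by rw [← hbb s]; exact Real.exp_pos _
  have hApos : ∀ s, 0 < s → 0 < A s := fun s hs => by
    rw [← hAr s]
    exact intervalIntegral.intervalIntegral_pos_of_pos (hca.intervalIntegrable 0 s) hposa hs
  have hBpos : ∀ s, 0 < s → 0 < B s := fun s hs => by
    rw [← hBr s]
    exact intervalIntegral.intervalIntegral_pos_of_pos (hcb.intervalIntegrable 0 s) hposb hs
  have hAT : 0 < A T := hApos T hT
  have hBT : 0 < B T := hBpos T hT
  have hDT : 0 < D T := by
    rw [← hDr T]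
    exact intervalIntegral.intervalIntegral_pos_of_pos_on
      ((hca.mul hcB).intervalIntegrable 0 T)
      (fun x hx => mul_pos (hposa x) (hBpos x hx.1)) hT
  have hET : 0 < E T := by
    rw [← hEr T]
    exact intervalIntegral.intervalIntegral_pos_of_pos_on
      ((hcb.mul hcA).intervalIntegrable 0 T)
      (fun x hx => mul_pos (hposb x) (hApos x hx.1)) hT
  have hprod : A T * B T = D T + E T := by
    have := Lprod a b hca hcb T
    simp only [hAr, hBr, hDr, hEr] at this
    exact this
  -- step 1
  obtain ⟨k₁, hk₁_def⟩ : ∃ x : ℝ, x = (Real.exp c' - 1) / A T := ⟨_, rfl⟩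
  have h1T : 1 + k₁ * A T = Real.exp c' := by
    rw [hk₁_def]; field_simp; ring
  have h1pos : ∀ s ∈ Set.Icc (0:ℝ) T, 0 < 1 + k₁ * A s := by
    intro s hs
    have h := pos_transfer hT.le a hca.continuousOn (fun u _ => (hposa u).le) k₁
      (by rw [hAr T, h1T]; exact Real.exp_pos c') s hs
    rwa [hAr s] at h
  have heps1 : Real.exp (pathEps α T π) = A T := by
    simp only [pathEps, haa, hAr]
    exact Real.exp_log hAT
  have h1 : ∀ r, pathAct α αv T c' π r = π r + Real.log (1 + k₁ * A r) • αv := by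
    intro r
    show π r + Real.log (1 + ((Real.exp c' - 1) / Real.exp (pathEps α T π)) *
      ∫ s in (0:ℝ)..r, Real.exp (-α (π s))) • αv = _
    rw [heps1]
    simp only [haa, hAr]
    rw [← hk₁_def]
  -- step 2
  have h2fun : ∀ s ∈ Set.Icc (0:ℝ) T,
      Real.exp (-β (π s + Real.log (1 + k₁ * A s) • αv)) = b s * (1 + k₁ * A s) := by
    intro s hs
    rw [map_add, _root_.map_smul, smul_eq_mul, hβα]
    rw [show -(β (π s) + Real.log (1 + k₁ * A s) * (-1))
        = -β (π s) + Real.log (1 + k₁ * A s) from by ring]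
    rw [Real.exp_add, Real.exp_log (h1pos s hs), hbb s]
  have h2L : ∀ r, (∫ s in (0:ℝ)..r, b s * (1 + k₁ * A s)) = B r + k₁ * E r := by
    intro r
    have := L1 b A hcb hcA k₁ r
    simp only [hBr, hEr] at this
    exact this
  have h2int : ∀ r, r ∈ Set.Icc (0:ℝ) T →
      (∫ s in (0:ℝ)..r, Real.exp (-β (pathAct α αv T c' π s))) = B r + k₁ * E r := by
    intro r hr
    rw [show (∫ s in (0:ℝ)..r, Real.exp (-β (pathAct α αv T c' π s)))
        = ∫ s in (0:ℝ)..r, b s * (1 + k₁ * A s) from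
      intervalIntegral.integral_congr (fun s hs => by
        rw [Set.uIcc_of_le hr.1] at hs
        show Real.exp (-β (pathAct α αv T c' π s)) = b s * (1 + k₁ * A s)
        rw [h1 s]
        exact h2fun s ⟨hs.1, hs.2.trans hr.2⟩)]
    exact h2L r
  have hBk : 0 < B T + k₁ * E T := by
    rw [← h2L T]
    apply intervalIntegral.intervalIntegral_pos_of_pos_on
    · exact (hcb.mul (continuous_const.add (continuous_const.mul hcA))).intervalIntegrable 0 T
    · intro x hx
      exact mul_pos (hposb x) (h1pos x ⟨hx.1.le, hx.2.le⟩)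
    · exact hT
  have heps2 : Real.exp (pathEps β T (pathAct α αv T c' π)) = B T + k₁ * E T := by
    show Real.exp (Real.log (∫ s in (0:ℝ)..T, Real.exp (-β (pathAct α αv T c' π s)))) = _
    rw [h2int T hTmem]
    exact Real.exp_log hBk
  obtain ⟨k₂, hk₂_def⟩ : ∃ x : ℝ, x = (Real.exp (c + c') - 1) / (B T + k₁ * E T) := ⟨_, rfl⟩
  have h2T : 1 + k₂ * (B T + k₁ * E T) = Real.exp (c + c') := by
    rw [hk₂_def]; field_simp; ring
  have h2 : ∀ r, r ∈ Set.Icc (0:ℝ) T →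
      pathAct β βv T (c + c') (pathAct α αv T c' π) r
        = π r + Real.log (1 + k₁ * A r) • αv
            + Real.log (1 + k₂ * (B r + k₁ * E r)) • βv := by
    intro r hr
    show pathAct α αv T c' π r + Real.log (1 + ((Real.exp (c + c') - 1) /
        Real.exp (pathEps β T (pathAct α αv T c' π))) *
        ∫ s in (0:ℝ)..r, Real.exp (-β (pathAct α αv T c' π s))) • βv = _
    rw [heps2, h2int r hr, h1 r, ← hk₂_def]
  have hcont2 : ContinuousOn (fun s => b s * (1 + k₁ * A s)) (Set.Icc 0 T) :=
    (hcb.mul (continuous_const.add (continuous_const.mul hcA))).continuousOn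
  have h2pos : ∀ s ∈ Set.Icc (0:ℝ) T, 0 < 1 + k₂ * (B s + k₁ * E s) := by
    intro s hs
    have h := pos_transfer hT.le _ hcont2
      (fun u hu => (mul_pos (hposb u) (h1pos u hu)).le) k₂
      (by rw [h2L T, h2T]; exact Real.exp_pos _) s hs
    rwa [h2L s] at h
  -- step 3
  have h3fun : ∀ s ∈ Set.Icc (0:ℝ) T,
      Real.exp (-α (pathAct β βv T (c + c') (pathAct α αv T c' π) s))
        = a s * (1 + k₂ * (B s + k₁ * E s)) / (1 + k₁ * A s) ^ 2 := by
    intro s hs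
    rw [h2 s hs, map_add, map_add, _root_.map_smul, _root_.map_smul, smul_eq_mul, smul_eq_mul, hαα, hαβ]
    rw [show -(α (π s) + Real.log (1 + k₁ * A s) * 2
          + Real.log (1 + k₂ * (B s + k₁ * E s)) * (-1))
        = (-α (π s) + Real.log (1 + k₂ * (B s + k₁ * E s)))
            - Real.log (1 + k₁ * A s) - Real.log (1 + k₁ * A s) from by ring]
    rw [Real.exp_sub, Real.exp_sub, Real.exp_add, Real.exp_log (h1pos s hs),
      Real.exp_log (h2pos s hs), haa s, div_div, ← sq]
  have h3L : ∀ r, r ∈ Set.Icc (0:ℝ) T →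
      (∫ s in (0:ℝ)..r, a s * (1 + k₂ * (B s + k₁ * E s)) / (1 + k₁ * A s) ^ 2)
        = (A r + k₂ * D r) / (1 + k₁ * A r) := by
    intro r hr
    have hpos' : ∀ s ∈ Set.uIcc (0:ℝ) r, 0 < 1 + k₁ * ∫ u in (0:ℝ)..s, a u := by
      intro s hs
      rw [Set.uIcc_of_le hr.1] at hs
      rw [hAr s]
      exact h1pos s ⟨hs.1, hs.2.trans hr.2⟩
    have := L2 a b hca hcb k₁ k₂ r hpos'
    simp only [hAr, hBr, hDr, hEr] at this
    exact this
  have h3int : ∀ r, r ∈ Set.Icc (0:ℝ) T →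
      (∫ s in (0:ℝ)..r, Real.exp (-α (pathAct β βv T (c + c') (pathAct α αv T c' π) s)))
        = (A r + k₂ * D r) / (1 + k₁ * A r) := by
    intro r hr
    rw [show (∫ s in (0:ℝ)..r, Real.exp (-α (pathAct β βv T (c + c') (pathAct α αv T c' π) s)))
        = ∫ s in (0:ℝ)..r, a s * (1 + k₂ * (B s + k₁ * E s)) / (1 + k₁ * A s) ^ 2 from
      intervalIntegral.integral_congr (fun s hs => by
        rw [Set.uIcc_of_le hr.1] at hs
        exact h3fun s ⟨hs.1, hs.2.trans hr.2⟩)]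
    exact h3L r hr
  have hcont3 : ContinuousOn
      (fun s => a s * (1 + k₂ * (B s + k₁ * E s)) / (1 + k₁ * A s) ^ 2) (Set.Icc 0 T) := by
    apply ContinuousOn.div
    · have hcE : Continuous E := by rw [hE_def]; exact contF _ (hcb.mul hcA)
      exact (hca.mul (continuous_const.add (continuous_const.mul
        (hcB.add (continuous_const.mul hcE))))).continuousOn
    · exact ((continuous_const.add (continuous_const.mul hcA)).pow 2).continuousOn
    · intro s hs
      exact pow_ne_zero 2 (h1pos s hs).ne'
  have hAk : 0 < (A T + k₂ * D T) / (1 + k₁ * A T) := by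
    rw [← h3L T hTmem]
    apply intervalIntegral.intervalIntegral_pos_of_pos_on
    · apply ContinuousOn.intervalIntegrable
      rw [Set.uIcc_of_le hT.le]
      exact hcont3
    · intro x hx
      have hx' : x ∈ Set.Icc (0:ℝ) T := ⟨hx.1.le, hx.2.le⟩
      exact div_pos (mul_pos (hposa x) (h2pos x hx')) (pow_pos (h1pos x hx') 2)
    · exact hT
  have heps3 : Real.exp (pathEps α T (pathAct β βv T (c + c') (pathAct α αv T c' π)))
      = (A T + k₂ * D T) / (1 + k₁ * A T) := by
    show Real.exp (Real.log (∫ s in (0:ℝ)..T,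
      Real.exp (-α (pathAct β βv T (c + c') (pathAct α αv T c' π) s)))) = _
    rw [h3int T hTmem]
    exact Real.exp_log hAk
  obtain ⟨k₃, hk₃_def⟩ : ∃ x : ℝ, x = (Real.exp c - 1) / ((A T + k₂ * D T) / (1 + k₁ * A T)) := ⟨_, rfl⟩
  have hnum3 : 0 < A T + k₂ * D T := by
    have h := mul_pos hAk (h1pos T hTmem)
    rwa [div_mul_cancel₀ _ (h1pos T hTmem).ne'] at h
  have h3T : 1 + k₃ * ((A T + k₂ * D T) / (1 + k₁ * A T)) = Real.exp c := by
    rw [hk₃_def, div_mul_cancel₀ _ hAk.ne']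
    ring
  have h3pos : 0 < 1 + k₃ * ((A t + k₂ * D t) / (1 + k₁ * A t)) := by
    have h := pos_transfer hT.le _ hcont3
      (fun s hs => (div_pos (mul_pos (hposa s) (h2pos s hs)) (pow_pos (h1pos s hs) 2)).le) k₃
      (by rw [h3L T hTmem, h3T]; exact Real.exp_pos _) t ht
    rwa [h3L t ht] at h
  have hfin : pathAct α αv T c (pathAct β βv T (c + c') (pathAct α αv T c' π)) t
      = pathAct β βv T (c + c') (pathAct α αv T c' π) t
        + Real.log (1 + k₃ * ((A t + k₂ * D t) / (1 + k₁ * A t))) • αv := by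
    show pathAct β βv T (c + c') (pathAct α αv T c' π) t
        + Real.log (1 + ((Real.exp c - 1) /
          Real.exp (pathEps α T (pathAct β βv T (c + c') (pathAct α αv T c' π)))) *
          ∫ s in (0:ℝ)..t, Real.exp (-α (pathAct β βv T (c + c') (pathAct α αv T c' π) s))) • αv
      = _
    rw [heps3, h3int t ht, ← hk₃_def]
  rw [hfin, h2 t ht]
  -- final algebra
  have hE' : E T = A T * B T - D T := by linarith
  have hduT : 0 < D T + Real.exp c' * E T := by positivity
  have hdvT : 0 < E T + Real.exp c * D T := by positivity
  have h1Tpos : 0 < 1 + k₁ * A T := h1pos T hTmem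
  have hY : Real.log (1 + k₂ * (B t + k₁ * E t))
      = Real.log (1 + ((Real.exp (c + c') - 1) * A T * B t
          + (Real.exp c' - 1) * (Real.exp (c + c') - 1) * E t) / (D T + Real.exp c' * E T)) := by
    congr 1
    have hmain : k₂ * (B t + k₁ * E t) = ((Real.exp (c + c') - 1) * A T * B t
        + (Real.exp c' - 1) * (Real.exp (c + c') - 1) * E t) / (D T + Real.exp c' * E T) := by
      rw [hk₂_def, div_mul_eq_mul_div, div_eq_div_iff hBk.ne' hduT.ne', hk₁_def, hE']
      field_simp
      ring
    rw [hmain]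
  have hX : Real.log (1 + k₁ * A t) + Real.log (1 + k₃ * ((A t + k₂ * D t) / (1 + k₁ * A t)))
      = Real.log (1 + ((Real.exp (c + c') - 1) * B T * A t
          + (Real.exp c - 1) * (Real.exp (c + c') - 1) * D t) / (E T + Real.exp c * D T)) := by
    rw [← Real.log_mul (h1pos t ht).ne' h3pos.ne']
    congr 1
    have h1tne := (h1pos t ht).ne'
    have stepA : (1 + k₁ * A t) * (1 + k₃ * ((A t + k₂ * D t) / (1 + k₁ * A t)))
        = 1 + (k₁ * A t + k₃ * (A t + k₂ * D t)) := by
      field_simp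
      ring
    rw [stepA]
    have e2 : k₃ = (Real.exp c - 1) * (1 + k₁ * A T) / (A T + k₂ * D T) := by
      rw [hk₃_def, div_div_eq_mul_div]
    have hmain : k₁ * A t + k₃ * (A t + k₂ * D t)
        = ((Real.exp (c + c') - 1) * B T * A t
            + (Real.exp c - 1) * (Real.exp (c + c') - 1) * D t)
          / (E T + Real.exp c * D T) := by
      have hq : 0 < Real.exp c' * E T + Real.exp (c + c') * D T := by positivity
      have e1 : k₂ = (Real.exp (c + c') - 1) * A T / (D T + Real.exp c' * E T) := by
        rw [hk₂_def, div_eq_div_iff hBk.ne' hduT.ne', hk₁_def, hE']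
        field_simp
        ring
      have e3 : A T + k₂ * D T
          = A T * (Real.exp c' * E T + Real.exp (c + c') * D T)
            / (D T + Real.exp c' * E T) := by
        rw [e1]
        field_simp
        ring
      have e5 : k₃ = (Real.exp c - 1) * Real.exp c' * (D T + Real.exp c' * E T)
          / (A T * (Real.exp c' * E T + Real.exp (c + c') * D T)) := by
        rw [e2, h1T, e3, div_div_eq_mul_div]
      rw [e5, e1, hk₁_def]
      have hduT' := hduT.ne'
      have hq' := (mul_pos hAT hq).ne'
      have hdvT' := hdvT.ne'
      rw [hE'] at hduT' hq' hdvT' ⊢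
      simp only [Real.exp_add] at hduT' hq' hdvT' ⊢
      field_simp
      ring
    rw [hmain]
  rw [← hX, ← hY, add_smul]
  abel

end VermaHelpers

/-- Verma relations in the geometric Littelmann path model, in ranks `A₁ × A₁` and `A₂`. -/
theorem verma_relations_rank_two
    {V : Type*} [NormedAddCommGroup V] [NormedSpace ℝ V] [FiniteDimensional ℝ V]
    (T : ℝ) (hT : 0 < T)
    (α β : V →ₗ[ℝ] ℝ) (αv βv : V) (hα : α αv = 2) (hβ : β βv = 2)
    (π : ℝ → V) (hπ : ContinuousOn π (Set.Icc 0 T)) (hπ0 : π 0 = 0)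
    (c₁ c₂ : ℝ) :
    ((α βv = 0 ∧ β αv = 0) → ∀ t ∈ Set.Icc (0:ℝ) T,
      pathAct α αv T c₁ (pathAct β βv T c₂ π) t =
        pathAct β βv T c₂ (pathAct α αv T c₁ π) t) ∧
    ((α βv = -1 ∧ β αv = -1) → ∀ t ∈ Set.Icc (0:ℝ) T,
      pathAct α αv T c₁ (pathAct β βv T (c₁ + c₂) (pathAct α αv T c₂ π)) t =
        pathAct β βv T c₂ (pathAct α αv T (c₁ + c₂) (pathAct β βv T c₁ π)) t) := by
  constructor
  · rintro ⟨hab, hba⟩ t ht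
    simp only [pathAct, pathEps, map_add, _root_.map_smul, smul_eq_mul, hab, hba,
      mul_zero, add_zero]
    abel
  · rintro ⟨hαβ, hβα⟩ t ht
    set ρ := Set.IccExtend hT.le ((Set.Icc (0:ℝ) T).restrict π) with hρ
    have hρc : Continuous ρ := (ContinuousOn.restrict hπ).Icc_extend'
    have hEq : Set.EqOn π ρ (Set.Icc 0 T) := by
      intro x hx
      rw [hρ, Set.IccExtend_of_mem hT.le _ hx]
      rfl
    have e1 := pathAct_congr α αv c₂ hT.le hEq
    have e2 := pathAct_congr β βv (c₁ + c₂) hT.le e1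
    have e3 := pathAct_congr α αv c₁ hT.le e2
    have f1 := pathAct_congr β βv c₁ hT.le hEq
    have f2 := pathAct_congr α αv (c₁ + c₂) hT.le f1
    have f3 := pathAct_congr β βv c₂ hT.le f2
    rw [e3 ht, f3 ht]
    have Hl := triple_eq T hT α β αv βv hα hβ hαβ hβα ρ hρc c₁ c₂ t ht
    have Hr := triple_eq T hT β α βv αv hβ hα hβα hαβ ρ hρc c₂ c₁ t ht
    rw [add_comm c₂ c₁] at Hr
    rw [Hl, Hr]
    abel
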